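/- Let u, v, w be a basis of ℝ³, let γ ≠ 0 and set x = γ·u − v + γ·w (so that [u+w] = [v+x] is the intersection of the diagonals of the quadrilateral [u],[v],[w],[x]). Then for every nonzero λ ∈ ℝ there exists a symmetric bilinear form φ_λ on ℝ³, nonzero, such that φ_λ(u, u+λv) = φ_λ(v, u+λv) = φ_λ(v, λv+w) = φ_λ(w, λv+w) = φ_λ(w, w+λx) = φ_λ(x, w+λx) = φ_λ(x, λx+u) = φ_λ(u, λx+u) = 0. In other words, a quadrilateral admits a 1-parameter family of inscribed conics, parameterized by the tangency point [u+λv] on the edge-line through [u] and [v]. -/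

import Mathlib

/-- For every nonzero λ there is a nonzero symmetric bilinear form `φ_λ`
defining a conic inscribed in the quadrilateral `[u],[v],[w],[x]` with tangency points
`[u+λv], [λv+w], [w+λx], [λx+u]`: a 1-parameter family of inscribed conics. -/
theorem stmt1 (u v w : Fin 3 → ℝ)
    (hb : LinearIndependent ℝ ![u, v, w])
    (hsp : Submodule.span ℝ ({u, v, w} : Set (Fin 3 → ℝ)) = ⊤)
    (γ : ℝ) (hγ : γ ≠ 0) (x : Fin 3 → ℝ) (hx : x = γ • u - v + γ • w)
    (l : ℝ) (hl : l ≠ 0) :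
    ∃ φ : (Fin 3 → ℝ) →ₗ[ℝ] (Fin 3 → ℝ) →ₗ[ℝ] ℝ, φ ≠ 0 ∧ (∀ y z, φ y z = φ z y) ∧
      φ u (u + l • v) = 0 ∧ φ v (u + l • v) = 0 ∧
      φ v (l • v + w) = 0 ∧ φ w (l • v + w) = 0 ∧
      φ w (w + l • x) = 0 ∧ φ x (w + l • x) = 0 ∧
      φ x (l • x + u) = 0 ∧ φ u (l • x + u) = 0 := by
  have hr : Set.range ![u, v, w] = ({u, v, w} : Set (Fin 3 → ℝ)) := by
    ext y
    simp [Fin.exists_fin_succ, Matrix.cons_val_zero, Matrix.cons_val_succ]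
    tauto
  let B : Module.Basis (Fin 3) ℝ (Fin 3 → ℝ) := Module.Basis.mk hb (by rw [hr, hsp])
  set f : ℝ := -(2*l + γ*l^2)/γ with hf
  set Mm : Matrix (Fin 3) (Fin 3) ℝ := !![l^2, -l, f; -l, 1, -l; f, -l, l^2] with hMm
  set φ := Matrix.toBilin B Mm with hφ
  have hBu : B 0 = u := by simp [B, Module.Basis.mk_apply]
  have hBv : B 1 = v := by simp [B, Module.Basis.mk_apply]
  have hBw : B 2 = w := by simp [B, Module.Basis.mk_apply]
  have key : ∀ i j, φ (B i) (B j) = Mm i j := by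
    intro i j
    rw [hφ, Matrix.toBilin_apply]
    simp [Finsupp.single_apply, Fin.sum_univ_three]

  have huu : φ u u = l^2 := by rw [← hBu]; rw [key 0 0]; simp [hMm]
  have huv : φ u v = -l := by rw [← hBu, ← hBv]; rw [key 0 1]; simp [hMm]
  have huw : φ u w = f := by rw [← hBu, ← hBw]; rw [key 0 2]; simp [hMm]
  have hvu : φ v u = -l := by rw [← hBu, ← hBv]; rw [key 1 0]; simp [hMm]
  have hvv : φ v v = 1 := by rw [← hBv]; rw [key 1 1]; simp [hMm]
  have hvw : φ v w = -l := by rw [← hBv, ← hBw]; rw [key 1 2]; simp [hMm]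
  have hwu : φ w u = f := by rw [← hBu, ← hBw]; rw [key 2 0]; simp [hMm]
  have hwv : φ w v = -l := by rw [← hBv, ← hBw]; rw [key 2 1]; simp [hMm]
  have hww : φ w w = l^2 := by rw [← hBw]; rw [key 2 2]; simp [hMm]
  refine ⟨φ, ?_, ?_, ?_, ?_, ?_, ?_, ?_, ?_, ?_, ?_⟩
  · intro h
    have : φ v v = 0 := by rw [h]; simp
    rw [hvv] at this; norm_num at this
  · intro y z
    rw [hφ, Matrix.toBilin_apply, Matrix.toBilin_apply]
    simp only [Fin.sum_univ_three, hMm]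
    simp
    try ring
  all_goals
    subst hx
    simp only [map_add, map_sub, map_smul, LinearMap.add_apply, LinearMap.sub_apply,
      LinearMap.smul_apply, smul_eq_mul, huu, huv, huw, hvu, hvv, hvw, hwu, hwv, hww, hf]
    field_simp
    try ring
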